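/- Let λ,b,c,α₁,α₂ ∈ ℂ with c±λ, α₁−b−λ, α₂−b+λ, α₁+2b, α₂+2b, α₁+α₂+b±c, c±3b all not integers. Then the sl₃-module F^α_{2b}(V) is irreducible. -/

import Mathlib

set_option linter.unusedVariables false
/- F^α_{2b}(V) modeled as (ℤ × ℤ × ℤ) →₀ ℂ with basis vᵢ(r₁,r₂) = single (i,r₁,r₂) 1,
   carrying the sl₃-action of formulas (3.2): parameters α₁, α₂, λ (written lam), b, c. -/

abbrev F3 := (ℤ × ℤ × ℤ) →₀ ℂ

/-- The basis vector vᵢ(r₁,r₂). -/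
noncomputable def vb (i r₁ r₂ : ℤ) : F3 := Finsupp.single (i, r₁, r₂) 1

noncomputable def Eb11 (α₁ α₂ lam b c : ℂ) : F3 →ₗ[ℂ] F3 :=
  Finsupp.lsum ℂ fun p => ((p.2.1 : ℂ) + α₁) • Finsupp.lsingle p

noncomputable def Eb22 (α₁ α₂ lam b c : ℂ) : F3 →ₗ[ℂ] F3 :=
  Finsupp.lsum ℂ fun p => ((p.2.2 : ℂ) + α₂) • Finsupp.lsingle p

noncomputable def Eb33 (α₁ α₂ lam b c : ℂ) : F3 →ₗ[ℂ] F3 :=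
  Finsupp.lsum ℂ fun p => (-((p.2.1 : ℂ) + α₁ + (p.2.2 : ℂ) + α₂)) • Finsupp.lsingle p

noncomputable def Eb12 (α₁ α₂ lam b c : ℂ) : F3 →ₗ[ℂ] F3 :=
  Finsupp.lsum ℂ fun p =>
    (lam + (p.1 : ℂ) - b + (p.2.2 : ℂ) + α₂) • Finsupp.lsingle (p.1, p.2.1 + 1, p.2.2 - 1)
      + (c + lam + (p.1 : ℂ)) • Finsupp.lsingle (p.1 + 1, p.2.1 + 1, p.2.2 - 1)

noncomputable def Eb21 (α₁ α₂ lam b c : ℂ) : F3 →ₗ[ℂ] F3 :=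
  Finsupp.lsum ℂ fun p =>
    (c - lam - (p.1 : ℂ)) • Finsupp.lsingle (p.1 - 1, p.2.1 - 1, p.2.2 + 1)
      + (-(lam + (p.1 : ℂ)) - b + (p.2.1 : ℂ) + α₁) • Finsupp.lsingle (p.1, p.2.1 - 1, p.2.2 + 1)

noncomputable def Eb13 (α₁ α₂ lam b c : ℂ) : F3 →ₗ[ℂ] F3 :=
  Finsupp.lsum ℂ fun p =>
    -(((p.2.1 : ℂ) + α₁ + (p.2.2 : ℂ) + α₂ + b + lam + (p.1 : ℂ)) • Finsupp.lsingle (p.1, p.2.1 + 1, p.2.2)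
      + (c + lam + (p.1 : ℂ)) • Finsupp.lsingle (p.1 + 1, p.2.1 + 1, p.2.2))

noncomputable def Eb31 (α₁ α₂ lam b c : ℂ) : F3 →ₗ[ℂ] F3 :=
  Finsupp.lsum ℂ fun p =>
    ((p.2.1 : ℂ) + α₁ - b - lam - (p.1 : ℂ)) • Finsupp.lsingle (p.1, p.2.1 - 1, p.2.2)

noncomputable def Eb23 (α₁ α₂ lam b c : ℂ) : F3 →ₗ[ℂ] F3 :=
  Finsupp.lsum ℂ fun p =>
    -((c - lam - (p.1 : ℂ)) • Finsupp.lsingle (p.1 - 1, p.2.1, p.2.2 + 1)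
      + ((p.2.1 : ℂ) + α₁ + (p.2.2 : ℂ) + α₂ + b - lam - (p.1 : ℂ)) • Finsupp.lsingle (p.1, p.2.1, p.2.2 + 1))

noncomputable def Eb32 (α₁ α₂ lam b c : ℂ) : F3 →ₗ[ℂ] F3 :=
  Finsupp.lsum ℂ fun p =>
    ((p.2.2 : ℂ) + α₂ - b + lam + (p.1 : ℂ)) • Finsupp.lsingle (p.1, p.2.1, p.2.2 - 1)


/-! ### Auxiliary machinery -/

section Aux

open Finsupp

/-- Evaluation of a "shifted multiplication" operator. -/
lemma lsum_shift_apply (coef : ℤ × ℤ × ℤ → ℂ) (σ τ : ℤ × ℤ × ℤ → ℤ × ℤ × ℤ)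
    (hστ : ∀ p, σ (τ p) = p) (hτσ : ∀ p, τ (σ p) = p) (w : F3) (k : ℤ × ℤ × ℤ) :
    (Finsupp.lsum ℂ fun p => coef p • Finsupp.lsingle (σ p) : F3 →ₗ[ℂ] F3) w k
      = coef (τ k) * w (τ k) := by
  classical
  have h1 : (Finsupp.lsum ℂ fun p => coef p • Finsupp.lsingle (σ p) : F3 →ₗ[ℂ] F3) w
      = w.sum fun p m => coef p • Finsupp.single (σ p) m := by
    rw [Finsupp.lsum_apply]
    exact Finsupp.sum_congr fun p _ => by
      simp [LinearMap.smul_apply, Finsupp.lsingle_apply]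
  rw [h1, Finsupp.sum_apply]
  rw [Finsupp.sum_eq_single (τ k) (fun p hp hne => ?_) (fun h => by simp)]
  · rw [Finsupp.smul_apply, Finsupp.single_apply, if_pos (hστ k)]
    simp
  · rw [Finsupp.smul_apply, Finsupp.single_apply, if_neg, smul_zero]
    intro h; exact hne (by rw [← hτσ p, h])

lemma Eb11_apply (α₁ α₂ lam b c : ℂ) (w : F3) (i r₁ r₂ : ℤ) :
    Eb11 α₁ α₂ lam b c w (i, r₁, r₂) = ((r₁:ℂ) + α₁) * w (i, r₁, r₂) := by
  have h := lsum_shift_apply (fun p : ℤ×ℤ×ℤ => ((p.2.1 : ℂ) + α₁))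
      (fun p => (p.1, p.2.1, p.2.2)) (fun p => (p.1, p.2.1, p.2.2))
      (fun p => by obtain ⟨x, y, z⟩ := p; simp only [Prod.mk.injEq, eq_self_iff_true, true_and, and_true] <;> omega)
      (fun p => by obtain ⟨x, y, z⟩ := p; simp only [Prod.mk.injEq, eq_self_iff_true, true_and, and_true] <;> omega) w (i, r₁, r₂)
  exact h.trans (by push_cast; ring_nf)


lemma Eb22_apply (α₁ α₂ lam b c : ℂ) (w : F3) (i r₁ r₂ : ℤ) :
    Eb22 α₁ α₂ lam b c w (i, r₁, r₂) = ((r₂:ℂ) + α₂) * w (i, r₁, r₂) := by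
  have h := lsum_shift_apply (fun p : ℤ×ℤ×ℤ => ((p.2.2 : ℂ) + α₂))
      (fun p => (p.1, p.2.1, p.2.2)) (fun p => (p.1, p.2.1, p.2.2))
      (fun p => by obtain ⟨x, y, z⟩ := p; simp only [Prod.mk.injEq, eq_self_iff_true, true_and, and_true] <;> omega)
      (fun p => by obtain ⟨x, y, z⟩ := p; simp only [Prod.mk.injEq, eq_self_iff_true, true_and, and_true] <;> omega) w (i, r₁, r₂)
  exact h.trans (by push_cast; ring_nf)


lemma Eb31_apply (α₁ α₂ lam b c : ℂ) (w : F3) (i r₁ r₂ : ℤ) :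
    Eb31 α₁ α₂ lam b c w (i, r₁, r₂) = (((r₁:ℂ)+1) + α₁ - b - lam - (i:ℂ)) * w (i, r₁+1, r₂) := by
  have h := lsum_shift_apply (fun p : ℤ×ℤ×ℤ => ((p.2.1 : ℂ) + α₁ - b - lam - (p.1 : ℂ)))
      (fun p => (p.1, p.2.1 - 1, p.2.2)) (fun p => (p.1, p.2.1 + 1, p.2.2))
      (fun p => by obtain ⟨x, y, z⟩ := p; simp only [Prod.mk.injEq, eq_self_iff_true, true_and, and_true] <;> omega)
      (fun p => by obtain ⟨x, y, z⟩ := p; simp only [Prod.mk.injEq, eq_self_iff_true, true_and, and_true] <;> omega) w (i, r₁, r₂)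
  exact h.trans (by push_cast; ring_nf)


lemma Eb32_apply (α₁ α₂ lam b c : ℂ) (w : F3) (i r₁ r₂ : ℤ) :
    Eb32 α₁ α₂ lam b c w (i, r₁, r₂) = (((r₂:ℂ)+1) + α₂ - b + lam + (i:ℂ)) * w (i, r₁, r₂+1) := by
  have h := lsum_shift_apply (fun p : ℤ×ℤ×ℤ => ((p.2.2 : ℂ) + α₂ - b + lam + (p.1 : ℂ)))
      (fun p => (p.1, p.2.1, p.2.2 - 1)) (fun p => (p.1, p.2.1, p.2.2 + 1))
      (fun p => by obtain ⟨x, y, z⟩ := p; simp only [Prod.mk.injEq, eq_self_iff_true, true_and, and_true] <;> omega)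
      (fun p => by obtain ⟨x, y, z⟩ := p; simp only [Prod.mk.injEq, eq_self_iff_true, true_and, and_true] <;> omega) w (i, r₁, r₂)
  exact h.trans (by push_cast; ring_nf)


lemma Eb12_apply (α₁ α₂ lam b c : ℂ) (w : F3) (i r₁ r₂ : ℤ) :
    Eb12 α₁ α₂ lam b c w (i, r₁, r₂) = (lam + (i:ℂ) - b + ((r₂:ℂ)+1) + α₂) * w (i, r₁-1, r₂+1) + (c + lam + ((i:ℂ)-1)) * w (i-1, r₁-1, r₂+1) := by
  have h1 := lsum_shift_apply (fun p : ℤ×ℤ×ℤ => lam + (p.1 : ℂ) - b + (p.2.2 : ℂ) + α₂)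
      (fun p => (p.1, p.2.1 + 1, p.2.2 - 1)) (fun p => (p.1, p.2.1 - 1, p.2.2 + 1))
      (fun p => by obtain ⟨x, y, z⟩ := p; simp only [Prod.mk.injEq, eq_self_iff_true, true_and, and_true] <;> omega)
      (fun p => by obtain ⟨x, y, z⟩ := p; simp only [Prod.mk.injEq, eq_self_iff_true, true_and, and_true] <;> omega) w (i, r₁, r₂)
  have h2 := lsum_shift_apply (fun p : ℤ×ℤ×ℤ => c + lam + (p.1 : ℂ))
      (fun p => (p.1 + 1, p.2.1 + 1, p.2.2 - 1)) (fun p => (p.1 - 1, p.2.1 - 1, p.2.2 + 1))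
      (fun p => by obtain ⟨x, y, z⟩ := p; simp only [Prod.mk.injEq, eq_self_iff_true, true_and, and_true] <;> omega)
      (fun p => by obtain ⟨x, y, z⟩ := p; simp only [Prod.mk.injEq, eq_self_iff_true, true_and, and_true] <;> omega) w (i, r₁, r₂)
  have hsplit : Eb12 α₁ α₂ lam b c
      = (Finsupp.lsum ℂ fun p : ℤ×ℤ×ℤ => (lam + (p.1 : ℂ) - b + (p.2.2 : ℂ) + α₂) • Finsupp.lsingle ((p.1, p.2.1 + 1, p.2.2 - 1)))
        + (Finsupp.lsum ℂ fun p : ℤ×ℤ×ℤ => (c + lam + (p.1 : ℂ)) • Finsupp.lsingle ((p.1 + 1, p.2.1 + 1, p.2.2 - 1))) := by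
    rw [show Eb12 α₁ α₂ lam b c
        = (Finsupp.lsum ℂ) ((fun p : ℤ×ℤ×ℤ => (lam + (p.1 : ℂ) - b + (p.2.2 : ℂ) + α₂) • Finsupp.lsingle ((p.1, p.2.1 + 1, p.2.2 - 1)))
            + (fun p : ℤ×ℤ×ℤ => (c + lam + (p.1 : ℂ)) • Finsupp.lsingle ((p.1 + 1, p.2.1 + 1, p.2.2 - 1)))) from rfl, map_add]
    
  rw [hsplit, LinearMap.add_apply, Finsupp.add_apply, h1, h2]
  push_cast
  ring


lemma Eb21_apply (α₁ α₂ lam b c : ℂ) (w : F3) (i r₁ r₂ : ℤ) :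
    Eb21 α₁ α₂ lam b c w (i, r₁, r₂) = (c - lam - ((i:ℂ)+1)) * w (i+1, r₁+1, r₂-1) + (-(lam + (i:ℂ)) - b + ((r₁:ℂ)+1) + α₁) * w (i, r₁+1, r₂-1) := by
  have h1 := lsum_shift_apply (fun p : ℤ×ℤ×ℤ => c - lam - (p.1 : ℂ))
      (fun p => (p.1 - 1, p.2.1 - 1, p.2.2 + 1)) (fun p => (p.1 + 1, p.2.1 + 1, p.2.2 - 1))
      (fun p => by obtain ⟨x, y, z⟩ := p; simp only [Prod.mk.injEq, eq_self_iff_true, true_and, and_true] <;> omega)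
      (fun p => by obtain ⟨x, y, z⟩ := p; simp only [Prod.mk.injEq, eq_self_iff_true, true_and, and_true] <;> omega) w (i, r₁, r₂)
  have h2 := lsum_shift_apply (fun p : ℤ×ℤ×ℤ => -(lam + (p.1 : ℂ)) - b + (p.2.1 : ℂ) + α₁)
      (fun p => (p.1, p.2.1 - 1, p.2.2 + 1)) (fun p => (p.1, p.2.1 + 1, p.2.2 - 1))
      (fun p => by obtain ⟨x, y, z⟩ := p; simp only [Prod.mk.injEq, eq_self_iff_true, true_and, and_true] <;> omega)
      (fun p => by obtain ⟨x, y, z⟩ := p; simp only [Prod.mk.injEq, eq_self_iff_true, true_and, and_true] <;> omega) w (i, r₁, r₂)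
  have hsplit : Eb21 α₁ α₂ lam b c
      = (Finsupp.lsum ℂ fun p : ℤ×ℤ×ℤ => (c - lam - (p.1 : ℂ)) • Finsupp.lsingle ((p.1 - 1, p.2.1 - 1, p.2.2 + 1)))
        + (Finsupp.lsum ℂ fun p : ℤ×ℤ×ℤ => (-(lam + (p.1 : ℂ)) - b + (p.2.1 : ℂ) + α₁) • Finsupp.lsingle ((p.1, p.2.1 - 1, p.2.2 + 1))) := by
    rw [show Eb21 α₁ α₂ lam b c
        = (Finsupp.lsum ℂ) ((fun p : ℤ×ℤ×ℤ => (c - lam - (p.1 : ℂ)) • Finsupp.lsingle ((p.1 - 1, p.2.1 - 1, p.2.2 + 1)))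
            + (fun p : ℤ×ℤ×ℤ => (-(lam + (p.1 : ℂ)) - b + (p.2.1 : ℂ) + α₁) • Finsupp.lsingle ((p.1, p.2.1 - 1, p.2.2 + 1)))) from rfl, map_add]
    
  rw [hsplit, LinearMap.add_apply, Finsupp.add_apply, h1, h2]
  push_cast
  ring

lemma Eb13_apply (α₁ α₂ lam b c : ℂ) (w : F3) (i r₁ r₂ : ℤ) :
    Eb13 α₁ α₂ lam b c w (i, r₁, r₂) = -(((((r₁:ℂ)-1) + α₁ + (r₂:ℂ) + α₂ + b + lam + (i:ℂ)) * w (i, r₁-1, r₂))) - (c + lam + ((i:ℂ)-1)) * w (i-1, r₁-1, r₂) := by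
  have h1 := lsum_shift_apply (fun p : ℤ×ℤ×ℤ => -((p.2.1 : ℂ) + α₁ + (p.2.2 : ℂ) + α₂ + b + lam + (p.1 : ℂ)))
      (fun p => (p.1, p.2.1 + 1, p.2.2)) (fun p => (p.1, p.2.1 - 1, p.2.2))
      (fun p => by obtain ⟨x, y, z⟩ := p; simp only [Prod.mk.injEq, eq_self_iff_true, true_and, and_true] <;> omega)
      (fun p => by obtain ⟨x, y, z⟩ := p; simp only [Prod.mk.injEq, eq_self_iff_true, true_and, and_true] <;> omega) w (i, r₁, r₂)
  have h2 := lsum_shift_apply (fun p : ℤ×ℤ×ℤ => -(c + lam + (p.1 : ℂ)))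
      (fun p => (p.1 + 1, p.2.1 + 1, p.2.2)) (fun p => (p.1 - 1, p.2.1 - 1, p.2.2))
      (fun p => by obtain ⟨x, y, z⟩ := p; simp only [Prod.mk.injEq, eq_self_iff_true, true_and, and_true] <;> omega)
      (fun p => by obtain ⟨x, y, z⟩ := p; simp only [Prod.mk.injEq, eq_self_iff_true, true_and, and_true] <;> omega) w (i, r₁, r₂)
  have hsplit : Eb13 α₁ α₂ lam b c
      = (Finsupp.lsum ℂ fun p : ℤ×ℤ×ℤ => (-((p.2.1 : ℂ) + α₁ + (p.2.2 : ℂ) + α₂ + b + lam + (p.1 : ℂ))) • Finsupp.lsingle (p.1, p.2.1 + 1, p.2.2))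
        + (Finsupp.lsum ℂ fun p : ℤ×ℤ×ℤ => (-(c + lam + (p.1 : ℂ))) • Finsupp.lsingle (p.1 + 1, p.2.1 + 1, p.2.2)) := by
    have hfun : (fun p : ℤ×ℤ×ℤ => -(((p.2.1 : ℂ) + α₁ + (p.2.2 : ℂ) + α₂ + b + lam + (p.1 : ℂ)) • Finsupp.lsingle (p.1, p.2.1 + 1, p.2.2)
            + (c + lam + (p.1 : ℂ)) • Finsupp.lsingle (p.1 + 1, p.2.1 + 1, p.2.2) : ℂ →ₗ[ℂ] F3))
        = ((fun p : ℤ×ℤ×ℤ => (-((p.2.1 : ℂ) + α₁ + (p.2.2 : ℂ) + α₂ + b + lam + (p.1 : ℂ))) • (Finsupp.lsingle (p.1, p.2.1 + 1, p.2.2) : ℂ →ₗ[ℂ] F3))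
            + (fun p : ℤ×ℤ×ℤ => (-(c + lam + (p.1 : ℂ))) • (Finsupp.lsingle (p.1 + 1, p.2.1 + 1, p.2.2) : ℂ →ₗ[ℂ] F3))) := by
      funext p
      simp only [Pi.add_apply]
      module
    rw [show Eb13 α₁ α₂ lam b c
        = (Finsupp.lsum ℂ) (fun p : ℤ×ℤ×ℤ => -(((p.2.1 : ℂ) + α₁ + (p.2.2 : ℂ) + α₂ + b + lam + (p.1 : ℂ)) • Finsupp.lsingle (p.1, p.2.1 + 1, p.2.2)
            + (c + lam + (p.1 : ℂ)) • Finsupp.lsingle (p.1 + 1, p.2.1 + 1, p.2.2) : ℂ →ₗ[ℂ] F3)) from rfl, hfun, map_add]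
  rw [hsplit, LinearMap.add_apply, Finsupp.add_apply, h1, h2]
  push_cast
  ring


lemma Eb23_apply (α₁ α₂ lam b c : ℂ) (w : F3) (i r₁ r₂ : ℤ) :
    Eb23 α₁ α₂ lam b c w (i, r₁, r₂) = -((c - lam - ((i:ℂ)+1)) * w (i+1, r₁, r₂-1)) - (((r₁:ℂ) + α₁ + ((r₂:ℂ)-1) + α₂ + b - lam - (i:ℂ)) * w (i, r₁, r₂-1)) := by
  have h1 := lsum_shift_apply (fun p : ℤ×ℤ×ℤ => -(c - lam - (p.1 : ℂ)))
      (fun p => (p.1 - 1, p.2.1, p.2.2 + 1)) (fun p => (p.1 + 1, p.2.1, p.2.2 - 1))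
      (fun p => by obtain ⟨x, y, z⟩ := p; simp only [Prod.mk.injEq, eq_self_iff_true, true_and, and_true] <;> omega)
      (fun p => by obtain ⟨x, y, z⟩ := p; simp only [Prod.mk.injEq, eq_self_iff_true, true_and, and_true] <;> omega) w (i, r₁, r₂)
  have h2 := lsum_shift_apply (fun p : ℤ×ℤ×ℤ => -((p.2.1 : ℂ) + α₁ + (p.2.2 : ℂ) + α₂ + b - lam - (p.1 : ℂ)))
      (fun p => (p.1, p.2.1, p.2.2 + 1)) (fun p => (p.1, p.2.1, p.2.2 - 1))
      (fun p => by obtain ⟨x, y, z⟩ := p; simp only [Prod.mk.injEq, eq_self_iff_true, true_and, and_true] <;> omega)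
      (fun p => by obtain ⟨x, y, z⟩ := p; simp only [Prod.mk.injEq, eq_self_iff_true, true_and, and_true] <;> omega) w (i, r₁, r₂)
  have hsplit : Eb23 α₁ α₂ lam b c
      = (Finsupp.lsum ℂ fun p : ℤ×ℤ×ℤ => (-(c - lam - (p.1 : ℂ))) • Finsupp.lsingle (p.1 - 1, p.2.1, p.2.2 + 1))
        + (Finsupp.lsum ℂ fun p : ℤ×ℤ×ℤ => (-((p.2.1 : ℂ) + α₁ + (p.2.2 : ℂ) + α₂ + b - lam - (p.1 : ℂ))) • Finsupp.lsingle (p.1, p.2.1, p.2.2 + 1)) := by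
    have hfun : (fun p : ℤ×ℤ×ℤ => -((c - lam - (p.1 : ℂ)) • Finsupp.lsingle (p.1 - 1, p.2.1, p.2.2 + 1)
            + ((p.2.1 : ℂ) + α₁ + (p.2.2 : ℂ) + α₂ + b - lam - (p.1 : ℂ)) • Finsupp.lsingle (p.1, p.2.1, p.2.2 + 1) : ℂ →ₗ[ℂ] F3))
        = ((fun p : ℤ×ℤ×ℤ => (-(c - lam - (p.1 : ℂ))) • (Finsupp.lsingle (p.1 - 1, p.2.1, p.2.2 + 1) : ℂ →ₗ[ℂ] F3))
            + (fun p : ℤ×ℤ×ℤ => (-((p.2.1 : ℂ) + α₁ + (p.2.2 : ℂ) + α₂ + b - lam - (p.1 : ℂ))) • (Finsupp.lsingle (p.1, p.2.1, p.2.2 + 1) : ℂ →ₗ[ℂ] F3))) := by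
      funext p
      simp only [Pi.add_apply]
      module
    rw [show Eb23 α₁ α₂ lam b c
        = (Finsupp.lsum ℂ) (fun p : ℤ×ℤ×ℤ => -((c - lam - (p.1 : ℂ)) • Finsupp.lsingle (p.1 - 1, p.2.1, p.2.2 + 1)
            + ((p.2.1 : ℂ) + α₁ + (p.2.2 : ℂ) + α₂ + b - lam - (p.1 : ℂ)) • Finsupp.lsingle (p.1, p.2.1, p.2.2 + 1) : ℂ →ₗ[ℂ] F3)) from rfl, hfun, map_add]
  rw [hsplit, LinearMap.add_apply, Finsupp.add_apply, h1, h2]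
  push_cast
  ring

lemma Eb31_vb (α₁ α₂ lam b c : ℂ) (i r₁ r₂ : ℤ) :
    Eb31 α₁ α₂ lam b c (vb i r₁ r₂) = ((r₁:ℂ) + α₁ - b - lam - (i:ℂ)) • vb i (r₁-1) r₂ := by
  simp only [vb, Eb31, Finsupp.lsum_single, LinearMap.smul_apply, LinearMap.add_apply,
    LinearMap.neg_apply, Finsupp.lsingle_apply]
  all_goals module


lemma Eb32_vb (α₁ α₂ lam b c : ℂ) (i r₁ r₂ : ℤ) :
    Eb32 α₁ α₂ lam b c (vb i r₁ r₂) = ((r₂:ℂ) + α₂ - b + lam + (i:ℂ)) • vb i r₁ (r₂-1) := by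
  simp only [vb, Eb32, Finsupp.lsum_single, LinearMap.smul_apply, LinearMap.add_apply,
    LinearMap.neg_apply, Finsupp.lsingle_apply]
  all_goals module


lemma Eb12_vb (α₁ α₂ lam b c : ℂ) (i r₁ r₂ : ℤ) :
    Eb12 α₁ α₂ lam b c (vb i r₁ r₂) = (lam + (i:ℂ) - b + (r₂:ℂ) + α₂) • vb i (r₁+1) (r₂-1) + (c + lam + (i:ℂ)) • vb (i+1) (r₁+1) (r₂-1) := by
  simp only [vb, Eb12, Finsupp.lsum_single, LinearMap.smul_apply, LinearMap.add_apply,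
    LinearMap.neg_apply, Finsupp.lsingle_apply]
  all_goals module


lemma Eb21_vb (α₁ α₂ lam b c : ℂ) (i r₁ r₂ : ℤ) :
    Eb21 α₁ α₂ lam b c (vb i r₁ r₂) = (c - lam - (i:ℂ)) • vb (i-1) (r₁-1) (r₂+1) + (-(lam + (i:ℂ)) - b + (r₁:ℂ) + α₁) • vb i (r₁-1) (r₂+1) := by
  simp only [vb, Eb21, Finsupp.lsum_single, LinearMap.smul_apply, LinearMap.add_apply,
    LinearMap.neg_apply, Finsupp.lsingle_apply]
  all_goals module


lemma Eb13_vb (α₁ α₂ lam b c : ℂ) (i r₁ r₂ : ℤ) :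
    Eb13 α₁ α₂ lam b c (vb i r₁ r₂) = (-((r₁:ℂ) + α₁ + (r₂:ℂ) + α₂ + b + lam + (i:ℂ))) • vb i (r₁+1) r₂ + (-(c + lam + (i:ℂ))) • vb (i+1) (r₁+1) r₂ := by
  simp only [vb, Eb13, Finsupp.lsum_single, LinearMap.smul_apply, LinearMap.add_apply,
    LinearMap.neg_apply, Finsupp.lsingle_apply]
  all_goals module


lemma Eb23_vb (α₁ α₂ lam b c : ℂ) (i r₁ r₂ : ℤ) :
    Eb23 α₁ α₂ lam b c (vb i r₁ r₂) = (-(c - lam - (i:ℂ))) • vb (i-1) r₁ (r₂+1) + (-((r₁:ℂ) + α₁ + (r₂:ℂ) + α₂ + b - lam - (i:ℂ))) • vb i r₁ (r₂+1) := by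
  simp only [vb, Eb23, Finsupp.lsum_single, LinearMap.smul_apply, LinearMap.add_apply,
    LinearMap.neg_apply, Finsupp.lsingle_apply]
  all_goals module

lemma shift_ne (z : ℂ) (h : ∀ m : ℤ, z ≠ (m:ℂ)) (t : ℤ) : z + (t:ℂ) ≠ 0 := by
  intro ht
  exact h (-t) (by push_cast; linear_combination ht)

lemma mem_of_combo2 (W : Submodule ℂ F3) (E v₀ v₁ : F3) (aa bb : ℂ)
    (hE : E ∈ W) (hv0 : v₀ ∈ W) (hbb : bb ≠ 0) (hcomb : E = aa • v₀ + bb • v₁) :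
    v₁ ∈ W := by
  have h : v₁ = bb⁻¹ • (E - aa • v₀) := by
    rw [hcomb]
    match_scalars <;> field_simp <;> ring
  rw [h]
  exact W.smul_mem _ (W.sub_mem hE (W.smul_mem _ hv0))

lemma mem_of_combo2x2 (W : Submodule ℂ F3) (E₁ E₂ v₀ v₁ : F3) (a₁ b₁ a₂ b₂ : ℂ)
    (hE₁ : E₁ ∈ W) (hE₂ : E₂ ∈ W)
    (h₁ : E₁ = a₁ • v₀ + b₁ • v₁) (h₂ : E₂ = a₂ • v₀ + b₂ • v₁)
    (hdet : a₁ * b₂ - a₂ * b₁ ≠ 0) : v₀ ∈ W := by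
  have h : v₀ = (a₁ * b₂ - a₂ * b₁)⁻¹ • (b₂ • E₁ - b₁ • E₂) := by
    rw [h₁, h₂]
    match_scalars <;> field_simp <;> ring
  rw [h]
  exact W.smul_mem _ (W.sub_mem (W.smul_mem _ hE₁) (W.smul_mem _ hE₂))

lemma int_reach (P : ℤ → Prop) (j : ℤ) (hj : P j)
    (hup : ∀ n, P n → P (n+1)) (hdn : ∀ n, P n → P (n-1)) : ∀ i, P i := by
  have hU : ∀ n : ℕ, P (j + n) := by
    intro n
    induction n with
    | zero => simpa using hj
    | succ k ih =>
        have h2 := hup _ ih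
        have e : j + ((k:ℤ)+1) = (j + (k:ℤ)) + 1 := by ring
        rw [show ((k+1 : ℕ) : ℤ) = (k:ℤ)+1 by push_cast; ring, e]
        exact h2
  have hD : ∀ n : ℕ, P (j - n) := by
    intro n
    induction n with
    | zero => simpa using hj
    | succ k ih =>
        have h2 := hdn _ ih
        rw [show ((k+1 : ℕ) : ℤ) = (k:ℤ)+1 by push_cast; ring, show j - ((k:ℤ)+1) = (j - (k:ℤ)) - 1 by ring]
        exact h2
  intro i
  rcases le_or_gt j i with h | h
  · obtain ⟨n, hn⟩ := Int.le.dest h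
    have := hU n
    rwa [hn] at this
  · obtain ⟨n, hn⟩ := Int.le.dest h.le
    have := hD n
    rwa [show j - (n:ℤ) = i by omega] at this

lemma spread (α₁ α₂ lam b c : ℂ)
    (h1 : ∀ m : ℤ, c + lam ≠ (m : ℂ)) (h2 : ∀ m : ℤ, c - lam ≠ (m : ℂ))
    (h3 : ∀ m : ℤ, α₁ - b - lam ≠ (m : ℂ)) (h4 : ∀ m : ℤ, α₂ - b + lam ≠ (m : ℂ))
    (h5 : ∀ m : ℤ, α₁ + 2 * b ≠ (m : ℂ)) (h6 : ∀ m : ℤ, α₂ + 2 * b ≠ (m : ℂ))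
    (h7 : ∀ m : ℤ, α₁ + α₂ + b + c ≠ (m : ℂ)) (h8 : ∀ m : ℤ, α₁ + α₂ + b - c ≠ (m : ℂ))
    (W : Submodule ℂ F3)
    (hW12 : ∀ x ∈ W, Eb12 α₁ α₂ lam b c x ∈ W)
    (hW21 : ∀ x ∈ W, Eb21 α₁ α₂ lam b c x ∈ W) (hW13 : ∀ x ∈ W, Eb13 α₁ α₂ lam b c x ∈ W)
    (hW31 : ∀ x ∈ W, Eb31 α₁ α₂ lam b c x ∈ W) (hW23 : ∀ x ∈ W, Eb23 α₁ α₂ lam b c x ∈ W)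
    (hW32 : ∀ x ∈ W, Eb32 α₁ α₂ lam b c x ∈ W)
    (j s₁ s₂ : ℤ) (hv : vb j s₁ s₂ ∈ W) : ∀ i r₁ r₂ : ℤ, vb i r₁ r₂ ∈ W := by
  -- basic nonvanishing facts
  have hq : ∀ r i : ℤ, (r:ℂ) + α₁ - b - lam - (i:ℂ) ≠ 0 := by
    intro r i hz
    exact shift_ne _ h3 (r - i) (by push_cast; linear_combination hz)
  have hp : ∀ r i : ℤ, (r:ℂ) + α₂ - b + lam + (i:ℂ) ≠ 0 := by
    intro r i hz
    exact shift_ne _ h4 (r + i) (by push_cast; linear_combination hz)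
  have hcp : ∀ i : ℤ, c + lam + (i:ℂ) ≠ 0 := fun i hz => shift_ne _ h1 i (by linear_combination hz)
  have hcm : ∀ i : ℤ, c - lam - (i:ℂ) ≠ 0 := fun i hz => shift_ne _ h2 (-i) (by push_cast; linear_combination hz)
  -- move up in i on a slice
  have up : ∀ i r₁ r₂ : ℤ, vb i r₁ r₂ ∈ W → vb (i+1) r₁ r₂ ∈ W := by
    intro i r₁ r₂ h
    have hE : Eb13 α₁ α₂ lam b c (Eb31 α₁ α₂ lam b c (vb i r₁ r₂)) ∈ W := hW13 _ (hW31 _ h)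
    rw [Eb31_vb, map_smul, Eb13_vb] at hE
    refine mem_of_combo2 W _ (vb i r₁ r₂) (vb (i+1) r₁ r₂)
      (((r₁:ℂ) + α₁ - b - lam - (i:ℂ)) * (-(((r₁:ℂ)-1) + α₁ + (r₂:ℂ) + α₂ + b + lam + (i:ℂ))))
      (((r₁:ℂ) + α₁ - b - lam - (i:ℂ)) * (-(c + lam + (i:ℂ)))) hE h
      (mul_ne_zero (hq r₁ i) (neg_ne_zero.mpr (hcp i))) ?_
    have e1 : r₁ - 1 + 1 = r₁ := by ring
    rw [e1]
    push_cast
    match_scalars <;> ring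
  -- move down in i on a slice
  have dn : ∀ i r₁ r₂ : ℤ, vb i r₁ r₂ ∈ W → vb (i-1) r₁ r₂ ∈ W := by
    intro i r₁ r₂ h
    have hE : Eb23 α₁ α₂ lam b c (Eb32 α₁ α₂ lam b c (vb i r₁ r₂)) ∈ W := hW23 _ (hW32 _ h)
    rw [Eb32_vb, map_smul, Eb23_vb] at hE
    refine mem_of_combo2 W _ (vb i r₁ r₂) (vb (i-1) r₁ r₂)
      (((r₂:ℂ) + α₂ - b + lam + (i:ℂ)) * (-((r₁:ℂ) + α₁ + (((r₂:ℂ)-1)) + α₂ + b - lam - (i:ℂ))))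
      (((r₂:ℂ) + α₂ - b + lam + (i:ℂ)) * (-(c - lam - (i:ℂ)))) hE h
      (mul_ne_zero (hp r₂ i) (neg_ne_zero.mpr (hcm i))) ?_
    have e1 : r₂ - 1 + 1 = r₂ := by ring
    rw [e1]
    push_cast
    match_scalars <;> ring
  -- full slice from one vector
  have full_of : ∀ i₀ r₁ r₂ : ℤ, vb i₀ r₁ r₂ ∈ W → ∀ i, vb i r₁ r₂ ∈ W := by
    intro i₀ r₁ r₂ h
    exact int_reach (fun i => vb i r₁ r₂ ∈ W) i₀ h (fun n hn => up n r₁ r₂ hn) (fun n hn => dn n r₁ r₂ hn)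
  -- down moves between slices
  have dn1 : ∀ i r₁ r₂ : ℤ, vb i r₁ r₂ ∈ W → vb i (r₁-1) r₂ ∈ W := by
    intro i r₁ r₂ h
    have hE : Eb31 α₁ α₂ lam b c (vb i r₁ r₂) ∈ W := hW31 _ h
    rw [Eb31_vb] at hE
    refine mem_of_combo2 W _ (vb i r₁ r₂) (vb i (r₁-1) r₂) 0
      ((r₁:ℂ) + α₁ - b - lam - (i:ℂ)) hE h (hq r₁ i) ?_
    match_scalars <;> ring
  have dn2 : ∀ i r₁ r₂ : ℤ, vb i r₁ r₂ ∈ W → vb i r₁ (r₂-1) ∈ W := by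
    intro i r₁ r₂ h
    have hE : Eb32 α₁ α₂ lam b c (vb i r₁ r₂) ∈ W := hW32 _ h
    rw [Eb32_vb] at hE
    refine mem_of_combo2 W _ (vb i r₁ r₂) (vb i r₁ (r₂-1)) 0
      ((r₂:ℂ) + α₂ - b + lam + (i:ℂ)) hE h (hp r₂ i) ?_
    match_scalars <;> ring
  -- diagonal moves
  have mv12 : ∀ i r₁ r₂ : ℤ, vb i r₁ r₂ ∈ W → vb i r₁ (r₂-1) ∈ W → vb i (r₁+1) (r₂-1) ∈ W := by
    intro i r₁ r₂ h h2'
    have hE : Eb12 α₁ α₂ lam b c (vb i r₁ r₂) + Eb13 α₁ α₂ lam b c (vb i r₁ (r₂-1)) ∈ W :=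
      W.add_mem (hW12 _ h) (hW13 _ h2')
    rw [Eb12_vb, Eb13_vb] at hE
    refine mem_of_combo2 W _ (vb i r₁ r₂) (vb i (r₁+1) (r₂-1)) 0
      (-((r₁:ℂ) + α₁ + 2*b - 1)) hE h ?_ ?_
    · intro hz
      exact shift_ne _ h5 (r₁ - 1) (by push_cast; linear_combination -hz)
    · push_cast
      match_scalars <;> ring
  have mv21 : ∀ i r₁ r₂ : ℤ, vb i r₁ r₂ ∈ W → vb i (r₁-1) r₂ ∈ W → vb i (r₁-1) (r₂+1) ∈ W := by
    intro i r₁ r₂ h h2'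
    have hE : Eb21 α₁ α₂ lam b c (vb i r₁ r₂) + Eb23 α₁ α₂ lam b c (vb i (r₁-1) r₂) ∈ W :=
      W.add_mem (hW21 _ h) (hW23 _ h2')
    rw [Eb21_vb, Eb23_vb] at hE
    refine mem_of_combo2 W _ (vb i r₁ r₂) (vb i (r₁-1) (r₂+1)) 0
      (-((r₂:ℂ) + α₂ + 2*b - 1)) hE h ?_ ?_
    · intro hz
      exact shift_ne _ h6 (r₂ - 1) (by push_cast; linear_combination -hz)
    · push_cast
      match_scalars <;> ring
  -- full-slice versions
  have Fdn1 : ∀ r₁ r₂ : ℤ, (∀ i, vb i r₁ r₂ ∈ W) → ∀ i, vb i (r₁-1) r₂ ∈ W :=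
    fun r₁ r₂ hF i => dn1 i r₁ r₂ (hF i)
  have Fdn2 : ∀ r₁ r₂ : ℤ, (∀ i, vb i r₁ r₂ ∈ W) → ∀ i, vb i r₁ (r₂-1) ∈ W :=
    fun r₁ r₂ hF i => dn2 i r₁ r₂ (hF i)
  have Fmv12 : ∀ r₁ r₂ : ℤ, (∀ i, vb i r₁ r₂ ∈ W) → ∀ i, vb i (r₁+1) (r₂-1) ∈ W :=
    fun r₁ r₂ hF i => mv12 i r₁ r₂ (hF i) (Fdn2 r₁ r₂ hF i)
  have Fmv21 : ∀ r₁ r₂ : ℤ, (∀ i, vb i r₁ r₂ ∈ W) → ∀ i, vb i (r₁-1) (r₂+1) ∈ W :=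
    fun r₁ r₂ hF i => mv21 i r₁ r₂ (hF i) (Fdn1 r₁ r₂ hF i)
  -- up moves via 2x2 systems
  have Fup1 : ∀ r₁ r₂ : ℤ, (∀ i, vb i r₁ r₂ ∈ W) → ∀ i, vb i (r₁+1) r₂ ∈ W := by
    intro r₁ r₂ hF k
    have hE₁ : Eb13 α₁ α₂ lam b c (vb k r₁ r₂) ∈ W := hW13 _ (hF k)
    have hE₂ : Eb23 α₁ α₂ lam b c (vb (k+1) (r₁+1) (r₂-1)) ∈ W := hW23 _ (Fmv12 r₁ r₂ hF (k+1))
    rw [Eb13_vb] at hE₁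
    rw [Eb23_vb] at hE₂
    refine mem_of_combo2x2 W _ _ (vb k (r₁+1) r₂) (vb (k+1) (r₁+1) r₂)
      (-((r₁:ℂ) + α₁ + (r₂:ℂ) + α₂ + b + lam + (k:ℂ))) (-(c + lam + (k:ℂ)))
      (-(c - lam - ((k:ℂ)+1))) (-((((r₁:ℂ)+1)) + α₁ + (((r₂:ℂ)-1)) + α₂ + b - lam - ((k:ℂ)+1)))
      hE₁ hE₂ ?_ ?_ ?_
    · push_cast
      match_scalars <;> ring
    · have e1 : r₂ - 1 + 1 = r₂ := by ring
      have e2 : k + 1 - 1 = k := by ring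
      rw [e1, e2]
      push_cast
      match_scalars <;> ring
    · have e : (-((r₁:ℂ) + α₁ + (r₂:ℂ) + α₂ + b + lam + (k:ℂ))) * (-((((r₁:ℂ)+1)) + α₁ + (((r₂:ℂ)-1)) + α₂ + b - lam - ((k:ℂ)+1)))
          - (-(c - lam - ((k:ℂ)+1))) * (-(c + lam + (k:ℂ)))
          = ((α₁ + α₂ + b - c) + ((r₁ + r₂ : ℤ) : ℂ)) * ((α₁ + α₂ + b + c) + ((r₁ + r₂ - 1 : ℤ) : ℂ)) := by
        push_cast
        ring
      rw [e]
      exact mul_ne_zero (shift_ne _ h8 _) (shift_ne _ h7 _)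
  have Fup2 : ∀ r₁ r₂ : ℤ, (∀ i, vb i r₁ r₂ ∈ W) → ∀ i, vb i r₁ (r₂+1) ∈ W := by
    intro r₁ r₂ hF k
    have hE₁ : Eb23 α₁ α₂ lam b c (vb (k+1) r₁ r₂) ∈ W := hW23 _ (hF (k+1))
    have hE₂ : Eb13 α₁ α₂ lam b c (vb k (r₁-1) (r₂+1)) ∈ W := hW13 _ (Fmv21 r₁ r₂ hF k)
    rw [Eb23_vb] at hE₁
    rw [Eb13_vb] at hE₂
    refine mem_of_combo2x2 W _ _ (vb k r₁ (r₂+1)) (vb (k+1) r₁ (r₂+1))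
      (-(c - lam - ((k:ℂ)+1))) (-((r₁:ℂ) + α₁ + (r₂:ℂ) + α₂ + b - lam - ((k:ℂ)+1)))
      (-((((r₁:ℂ)-1)) + α₁ + (((r₂:ℂ)+1)) + α₂ + b + lam + (k:ℂ))) (-(c + lam + (k:ℂ)))
      hE₁ hE₂ ?_ ?_ ?_
    · have e2 : k + 1 - 1 = k := by ring
      rw [e2]
      push_cast
      match_scalars <;> ring
    · have e1 : r₁ - 1 + 1 = r₁ := by ring
      rw [e1]
      push_cast
      match_scalars <;> ring
    · have e : (-(c - lam - ((k:ℂ)+1))) * (-(c + lam + (k:ℂ)))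
          - (-((((r₁:ℂ)-1)) + α₁ + (((r₂:ℂ)+1)) + α₂ + b + lam + (k:ℂ))) * (-((r₁:ℂ) + α₁ + (r₂:ℂ) + α₂ + b - lam - ((k:ℂ)+1)))
          = -(((α₁ + α₂ + b - c) + ((r₁ + r₂ : ℤ) : ℂ)) * ((α₁ + α₂ + b + c) + ((r₁ + r₂ - 1 : ℤ) : ℂ))) := by
        push_cast
        ring
      rw [e]
      exact neg_ne_zero.mpr (mul_ne_zero (shift_ne _ h8 _) (shift_ne _ h7 _))
  -- navigate all slices
  have Fstart : ∀ i, vb i s₁ s₂ ∈ W := full_of j s₁ s₂ hv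
  have Fcol : ∀ t₁ : ℤ, ∀ i, vb i t₁ s₂ ∈ W := by
    refine int_reach (fun t₁ => ∀ i, vb i t₁ s₂ ∈ W) s₁ Fstart ?_ ?_
    · intro n hn; exact Fup1 n s₂ hn
    · intro n hn; exact Fdn1 n s₂ hn
  intro i r₁ r₂
  have Fall : ∀ t₂ : ℤ, ∀ i, vb i r₁ t₂ ∈ W := by
    refine int_reach (fun t₂ => ∀ i, vb i r₁ t₂ ∈ W) s₂ (Fcol r₁) ?_ ?_
    · intro n hn; exact Fup2 r₁ n hn
    · intro n hn; exact Fdn2 r₁ n hn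
  exact Fall r₂ i

lemma key_lemma (α₁ α₂ lam b c : ℂ)
    (h1 : ∀ m : ℤ, c + lam ≠ (m : ℂ)) (h2 : ∀ m : ℤ, c - lam ≠ (m : ℂ))
    (h3 : ∀ m : ℤ, α₁ - b - lam ≠ (m : ℂ)) (h4 : ∀ m : ℤ, α₂ - b + lam ≠ (m : ℂ))
    (h9 : ∀ m : ℤ, c + 3 * b ≠ (m : ℂ)) (h10 : ∀ m : ℤ, c - 3 * b ≠ (m : ℂ))
    (W : Submodule ℂ F3)
    (hW12 : ∀ x ∈ W, Eb12 α₁ α₂ lam b c x ∈ W)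
    (hW21 : ∀ x ∈ W, Eb21 α₁ α₂ lam b c x ∈ W) (hW13 : ∀ x ∈ W, Eb13 α₁ α₂ lam b c x ∈ W)
    (hW31 : ∀ x ∈ W, Eb31 α₁ α₂ lam b c x ∈ W) (hW23 : ∀ x ∈ W, Eb23 α₁ α₂ lam b c x ∈ W)
    (hW32 : ∀ x ∈ W, Eb32 α₁ α₂ lam b c x ∈ W) :
    ∀ d : ℕ, ∀ σ₁ σ₂ m : ℤ, ∀ w : F3, w ∈ W → w ≠ 0 →
      (∀ i r₁ r₂ : ℤ, w (i, r₁, r₂) ≠ 0 → r₁ = σ₁ ∧ r₂ = σ₂ ∧ m ≤ i ∧ i ≤ m + (d:ℤ)) →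
      ∃ j s₁ s₂ : ℤ, vb j s₁ s₂ ∈ W := by
  intro d
  induction d using Nat.strong_induction_on with
  | _ d IH =>
  intro σ₁ σ₂ m w hwW hw0 hsupp
  classical
  have hIne : (w.support.image Prod.fst).Nonempty :=
    ((Finsupp.support_nonempty_iff.mpr hw0).image _)
  set m₀ := (w.support.image Prod.fst).min' hIne with hm₀def
  set M₀ := (w.support.image Prod.fst).max' hIne with hM₀def
  -- witness at the minimum
  obtain ⟨qm, hqmS, hqm1⟩ := Finset.mem_image.mp ((w.support.image Prod.fst).min'_mem hIne)
  obtain ⟨qi, qr1, qr2⟩ := qm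
  have hqmne : w (qi, qr1, qr2) ≠ 0 := Finsupp.mem_support_iff.mp hqmS
  obtain ⟨e1, e2, hmle0, _⟩ := hsupp qi qr1 qr2 hqmne
  have hqm1' : qi = m₀ := hqm1
  have hmle : m ≤ m₀ := by omega
  have hwm : w (m₀, σ₁, σ₂) ≠ 0 := by rw [hqm1', e1, e2] at hqmne; exact hqmne
  -- witness at the maximum
  obtain ⟨qM, hqMS, hqM1⟩ := Finset.mem_image.mp ((w.support.image Prod.fst).max'_mem hIne)
  obtain ⟨Qi, Qr1, Qr2⟩ := qM
  have hqMne : w (Qi, Qr1, Qr2) ≠ 0 := Finsupp.mem_support_iff.mp hqMS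
  obtain ⟨E1', E2', _, hMle0⟩ := hsupp Qi Qr1 Qr2 hqMne
  have hqM1' : Qi = M₀ := hqM1
  have hMle : M₀ ≤ m + (d:ℤ) := by omega
  -- bounds on the support
  have hbd : ∀ i r₁ r₂ : ℤ, w (i, r₁, r₂) ≠ 0 → r₁ = σ₁ ∧ r₂ = σ₂ ∧ m₀ ≤ i ∧ i ≤ M₀ := by
    intro i r₁ r₂ h
    obtain ⟨f1, f2, _, _⟩ := hsupp i r₁ r₂ h
    refine ⟨f1, f2, ?_, ?_⟩
    · exact (w.support.image Prod.fst).min'_le i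
        (Finset.mem_image.mpr ⟨(i, r₁, r₂), Finsupp.mem_support_iff.mpr h, rfl⟩)
    · exact (w.support.image Prod.fst).le_max' i
        (Finset.mem_image.mpr ⟨(i, r₁, r₂), Finsupp.mem_support_iff.mpr h, rfl⟩)
  have hvan : ∀ i r₁ r₂ : ℤ, (r₁ ≠ σ₁ ∨ r₂ ≠ σ₂ ∨ i < m₀ ∨ M₀ < i) → w (i, r₁, r₂) = 0 := by
    intro i r₁ r₂ h
    by_contra hnz
    obtain ⟨f1, f2, f3, f4⟩ := hbd i r₁ r₂ hnz
    rcases h with h | h | h | h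
    · exact h f1
    · exact h f2
    · omega
    · omega
  have hm₀M₀ : m₀ ≤ M₀ := (w.support.image Prod.fst).min'_le M₀ (by rw [← hqM1']; exact Finset.mem_image.mpr ⟨(Qi,Qr1,Qr2), hqMS, rfl⟩)
  by_cases hMm : M₀ = m₀
  · -- single point: w is a multiple of a basis vector
    refine ⟨m₀, σ₁, σ₂, ?_⟩
    have hvb : vb m₀ σ₁ σ₂ = (w (m₀, σ₁, σ₂))⁻¹ • w := by
      ext q
      obtain ⟨i, r₁, r₂⟩ := q
      rw [Finsupp.smul_apply, smul_eq_mul, vb]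
      by_cases hq : ((i, r₁, r₂) : ℤ × ℤ × ℤ) = ((m₀, σ₁, σ₂) : ℤ × ℤ × ℤ)
      · rw [hq, Finsupp.single_eq_same]
        field_simp
      · rw [Finsupp.single_eq_of_ne' (Ne.symm hq)]
        rcases em (w (i, r₁, r₂) = 0) with h0 | h0
        · rw [h0]; ring
        · obtain ⟨f1, f2, f3, f4⟩ := hbd i r₁ r₂ h0
          exfalso
          apply hq
          subst f1; subst f2
          have : i = m₀ := by omega
          rw [this]
    rw [hvb]
    exact W.smul_mem _ hwW
  · -- descent step
    have hlt : m₀ < M₀ := lt_of_le_of_ne hm₀M₀ (Ne.symm hMm)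
    set z₁ : F3 := (-(((σ₁:ℂ) + α₁ - b - lam - (m₀:ℂ)) * (((σ₂:ℂ) + α₂ - b + lam + (M₀:ℂ)) - (((σ₁:ℂ)-1) + α₁ + ((σ₂:ℂ)-1) + α₂ + b + lam + (m₀:ℂ))))) • (Eb32 α₁ α₂ lam b c w)
        + ((σ₂:ℂ) + α₂ - b + lam + (M₀:ℂ)) • (Eb12 α₁ α₂ lam b c (Eb31 α₁ α₂ lam b c w))
        + Eb13 α₁ α₂ lam b c (Eb31 α₁ α₂ lam b c (Eb32 α₁ α₂ lam b c w)) with hz₁def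
    set z₂ : F3 := (-(((σ₂:ℂ) + α₂ - b + lam + (M₀:ℂ)) * (((σ₁:ℂ) + α₁ - b - lam - (m₀:ℂ)) - (((σ₁:ℂ)-1) + α₁ + ((σ₂:ℂ)-1) + α₂ + b - lam - (M₀:ℂ))))) • (Eb31 α₁ α₂ lam b c w)
        + ((σ₁:ℂ) + α₁ - b - lam - (m₀:ℂ)) • (Eb21 α₁ α₂ lam b c (Eb32 α₁ α₂ lam b c w))
        + Eb23 α₁ α₂ lam b c (Eb32 α₁ α₂ lam b c (Eb31 α₁ α₂ lam b c w)) with hz₂def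
    have hz₁W : z₁ ∈ W :=
      W.add_mem (W.add_mem (W.smul_mem _ (hW32 w hwW)) (W.smul_mem _ (hW12 _ (hW31 w hwW))))
        (hW13 _ (hW31 _ (hW32 w hwW)))
    have hz₂W : z₂ ∈ W :=
      W.add_mem (W.add_mem (W.smul_mem _ (hW31 w hwW)) (W.smul_mem _ (hW21 _ (hW32 w hwW))))
        (hW23 _ (hW32 _ (hW31 w hwW)))
    have hz₁c : ∀ j s₁ s₂ : ℤ, z₁ (j, s₁, s₂)
        = (((s₂:ℂ)+1) + α₂ - b + lam + (j:ℂ))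
            * ((-(((σ₁:ℂ) + α₁ - b - lam - (m₀:ℂ)) * (((σ₂:ℂ) + α₂ - b + lam + (M₀:ℂ)) - (((σ₁:ℂ)-1) + α₁ + ((σ₂:ℂ)-1) + α₂ + b + lam + (m₀:ℂ))))) + ((s₁:ℂ) + α₁ - b - lam - (j:ℂ))
                * (((σ₂:ℂ) + α₂ - b + lam + (M₀:ℂ)) - (((s₁:ℂ)-1) + α₁ + (s₂:ℂ) + α₂ + b + lam + (j:ℂ))))
            * w (j, s₁, s₂+1)
          + (c + lam + ((j:ℂ)-1)) * ((s₁:ℂ) + α₁ - b - lam - ((j:ℂ)-1))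
              * (((σ₂:ℂ) + α₂ - b + lam + (M₀:ℂ)) - (((s₂:ℂ)+1) + α₂ - b + lam + ((j:ℂ)-1)))
            * w (j-1, s₁, s₂+1) := by
      intro j s₁ s₂
      rw [hz₁def]
      simp only [Finsupp.add_apply, Finsupp.smul_apply, smul_eq_mul, Eb32_apply, Eb12_apply,
        Eb31_apply, Eb13_apply, sub_add_cancel, add_sub_cancel_right]
      push_cast
      ring
    have hz₂c : ∀ j s₁ s₂ : ℤ, z₂ (j, s₁, s₂)
        = (((s₁:ℂ)+1) + α₁ - b - lam - (j:ℂ))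
            * ((-(((σ₂:ℂ) + α₂ - b + lam + (M₀:ℂ)) * (((σ₁:ℂ) + α₁ - b - lam - (m₀:ℂ)) - (((σ₁:ℂ)-1) + α₁ + ((σ₂:ℂ)-1) + α₂ + b - lam - (M₀:ℂ))))) + ((s₂:ℂ) + α₂ - b + lam + (j:ℂ))
                * (((σ₁:ℂ) + α₁ - b - lam - (m₀:ℂ)) - ((s₁:ℂ) + α₁ + ((s₂:ℂ)-1) + α₂ + b - lam - (j:ℂ))))
            * w (j, s₁+1, s₂)
          + (c - lam - ((j:ℂ)+1)) * ((s₂:ℂ) + α₂ - b + lam + ((j:ℂ)+1))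
              * (((σ₁:ℂ) + α₁ - b - lam - (m₀:ℂ)) - (((s₁:ℂ)+1) + α₁ - b - lam - ((j:ℂ)+1)))
            * w (j+1, s₁+1, s₂) := by
      intro j s₁ s₂
      rw [hz₂def]
      simp only [Finsupp.add_apply, Finsupp.smul_apply, smul_eq_mul, Eb32_apply, Eb21_apply,
        Eb31_apply, Eb23_apply, sub_add_cancel, add_sub_cancel_right]
      push_cast
      ring
    have hz₁s : ∀ i r₁ r₂ : ℤ, z₁ (i, r₁, r₂) ≠ 0 →
        r₁ = σ₁ ∧ r₂ = σ₂ - 1 ∧ m₀ + 1 ≤ i ∧ i ≤ M₀ := by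
      intro i r₁ r₂ hnz
      rw [hz₁c] at hnz
      by_cases e₁ : r₁ = σ₁
      · by_cases e₂ : r₂ = σ₂ - 1
        · replace e₁ := e₁.symm; subst e₁; subst e₂
          have hii : m₀ + 1 ≤ i ∧ i ≤ M₀ := by
            by_contra hcon
            apply hnz
            rcases (by omega : i < m₀ ∨ i = m₀ ∨ i = M₀ + 1 ∨ M₀ + 1 < i) with h | h | h | h
            · rw [hvan i σ₁ (σ₂-1+1) (Or.inr (Or.inr (Or.inl (by omega)))),
                hvan (i-1) σ₁ (σ₂-1+1) (Or.inr (Or.inr (Or.inl (by omega))))]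
              ring
            · subst h
              rw [hvan (m₀-1) σ₁ (σ₂-1+1) (Or.inr (Or.inr (Or.inl (by omega))))]
              push_cast
              ring
            · subst h
              rw [hvan (M₀+1) σ₁ (σ₂-1+1) (Or.inr (Or.inr (Or.inr (by omega))))]
              push_cast
              ring
            · rw [hvan i σ₁ (σ₂-1+1) (Or.inr (Or.inr (Or.inr (by omega)))),
                hvan (i-1) σ₁ (σ₂-1+1) (Or.inr (Or.inr (Or.inr (by omega))))]
              ring
          exact ⟨rfl, rfl, hii.1, hii.2⟩
        · exfalso
          apply hnz
          rw [hvan i r₁ (r₂+1) (Or.inr (Or.inl (by omega))),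
            hvan (i-1) r₁ (r₂+1) (Or.inr (Or.inl (by omega)))]
          ring
      · exfalso
        apply hnz
        rw [hvan i r₁ (r₂+1) (Or.inl e₁), hvan (i-1) r₁ (r₂+1) (Or.inl e₁)]
        ring
    have hz₂s : ∀ i r₁ r₂ : ℤ, z₂ (i, r₁, r₂) ≠ 0 →
        r₁ = σ₁ - 1 ∧ r₂ = σ₂ ∧ m₀ ≤ i ∧ i ≤ M₀ - 1 := by
      intro i r₁ r₂ hnz
      rw [hz₂c] at hnz
      by_cases e₁ : r₁ = σ₁ - 1
      · by_cases e₂ : r₂ = σ₂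
        · subst e₁; replace e₂ := e₂.symm; subst e₂
          have hii : m₀ ≤ i ∧ i ≤ M₀ - 1 := by
            by_contra hcon
            apply hnz
            rcases (by omega : i < m₀ - 1 ∨ i = m₀ - 1 ∨ i = M₀ ∨ M₀ < i) with h | h | h | h
            · rw [hvan i (σ₁-1+1) σ₂ (Or.inr (Or.inr (Or.inl (by omega)))),
                hvan (i+1) (σ₁-1+1) σ₂ (Or.inr (Or.inr (Or.inl (by omega))))]
              ring
            · subst h
              rw [hvan (m₀-1) (σ₁-1+1) σ₂ (Or.inr (Or.inr (Or.inl (by omega))))]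
              push_cast
              ring
            · subst h
              rw [hvan (M₀+1) (σ₁-1+1) σ₂ (Or.inr (Or.inr (Or.inr (by omega))))]
              push_cast
              ring
            · rw [hvan i (σ₁-1+1) σ₂ (Or.inr (Or.inr (Or.inr (by omega)))),
                hvan (i+1) (σ₁-1+1) σ₂ (Or.inr (Or.inr (Or.inr (by omega))))]
              ring
          exact ⟨rfl, rfl, hii.1, hii.2⟩
        · exfalso
          apply hnz
          rw [hvan i (r₁+1) r₂ (Or.inr (Or.inl e₂)),
            hvan (i+1) (r₁+1) r₂ (Or.inr (Or.inl e₂))]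
          ring
      · exfalso
        apply hnz
        rw [hvan i (r₁+1) r₂ (Or.inl (by omega)), hvan (i+1) (r₁+1) r₂ (Or.inl (by omega))]
        ring
    by_cases hz10 : z₁ = 0
    · by_cases hz20 : z₂ = 0
      · exfalso
        have hE1 : z₁ (m₀+1, σ₁, σ₂-1) = 0 := by rw [hz10]; rfl
        have hE2 : z₂ (m₀, σ₁-1, σ₂) = 0 := by rw [hz20]; rfl
        rw [hz₁c] at hE1
        rw [hz₂c] at hE2
        rw [show (m₀+1-1 : ℤ) = m₀ from by ring, show (σ₂-1+1 : ℤ) = σ₂ from by ring] at hE1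
        rw [show (σ₁-1+1 : ℤ) = σ₁ from by ring] at hE2
        push_cast at hE1 hE2
        have hfalse : w (m₀, σ₁, σ₂) * ((σ₁:ℂ) + α₁ - b - lam - (m₀:ℂ)) * ((M₀:ℂ) - (m₀:ℂ))
            * ((c + 3*b - (((M₀:ℂ) - (m₀:ℂ)) + 2)) * (c - 3*b + (((M₀:ℂ) - (m₀:ℂ)) + 1))) = 0 := by
          linear_combination (c - lam - (m₀:ℂ) - 1) * hE1
            + (-(lam + (m₀:ℂ) + 3*b - ((M₀:ℂ) - (m₀:ℂ)) - 1)) * hE2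
        have F2 : (σ₁:ℂ) + α₁ - b - lam - (m₀:ℂ) ≠ 0 := by
          intro hz
          exact shift_ne _ h3 (σ₁ - m₀) (by push_cast; linear_combination hz)
        have F3 : ((M₀:ℂ) - (m₀:ℂ)) ≠ 0 := by
          rw [show ((M₀:ℂ) - (m₀:ℂ)) = ((M₀ - m₀ : ℤ) : ℂ) from by push_cast; ring]
          exact Int.cast_ne_zero.mpr (by omega)
        have F4 : (c + 3*b - (((M₀:ℂ) - (m₀:ℂ)) + 2)) ≠ 0 := by
          intro hz
          exact shift_ne _ h9 (-(M₀ - m₀ + 2)) (by push_cast; linear_combination hz)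
        have F5 : (c - 3*b + (((M₀:ℂ) - (m₀:ℂ)) + 1)) ≠ 0 := by
          intro hz
          exact shift_ne _ h10 (M₀ - m₀ + 1) (by push_cast; linear_combination hz)
        exact (mul_ne_zero (mul_ne_zero (mul_ne_zero hwm F2) F3) (mul_ne_zero F4 F5)) hfalse
      · -- use z₂, window [m₀, M₀ - 1]
        exact IH (M₀ - m₀ - 1).toNat (by omega) (σ₁-1) σ₂ m₀ z₂ hz₂W hz20
          (fun i r₁ r₂ h => by
            obtain ⟨f1, f2, f3, f4⟩ := hz₂s i r₁ r₂ h
            exact ⟨f1, f2, f3, by omega⟩)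
    · -- use z₁, window [m₀ + 1, M₀]
      exact IH (M₀ - m₀ - 1).toNat (by omega) σ₁ (σ₂-1) (m₀+1) z₁ hz₁W hz10
        (fun i r₁ r₂ h => by
          obtain ⟨f1, f2, f3, f4⟩ := hz₁s i r₁ r₂ h
          exact ⟨f1, f2, f3, by omega⟩)

lemma purge1 (α₁ α₂ lam b c : ℂ) (W : Submodule ℂ F3)
    (hW11 : ∀ x ∈ W, Eb11 α₁ α₂ lam b c x ∈ W) :
    ∀ n : ℕ, ∀ w : F3, w ∈ W → w ≠ 0 → (w.support.image (fun q => q.2.1)).card ≤ n →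
      ∃ w' : F3, w' ∈ W ∧ w' ≠ 0 ∧ ∃ ρ : ℤ, ∀ i r₁ r₂ : ℤ, w' (i, r₁, r₂) ≠ 0 → r₁ = ρ := by
  intro n
  induction n with
  | zero =>
      intro w hwW hw0 hcard
      exfalso
      have h1 : (w.support.image (fun q => q.2.1)).Nonempty :=
        (Finsupp.support_nonempty_iff.mpr hw0).image _
      have := h1.card_pos
      omega
  | succ n IH =>
      intro w hwW hw0 hcard
      by_cases hS : (w.support.image (fun q => q.2.1)).card ≤ 1
      · refine ⟨w, hwW, hw0, ?_⟩
        have h1 : (w.support.image (fun q => q.2.1)).Nonempty :=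
          (Finsupp.support_nonempty_iff.mpr hw0).image _
        obtain ⟨ρ, hρ⟩ := h1
        refine ⟨ρ, fun i r₁ r₂ h => ?_⟩
        have hmem : r₁ ∈ (w.support.image (fun q => q.2.1)) :=
          Finset.mem_image.mpr ⟨(i, r₁, r₂), Finsupp.mem_support_iff.mpr h, rfl⟩
        exact Finset.card_le_one.mp hS r₁ hmem ρ hρ
      · obtain ⟨a, ha, bb, hb, hab⟩ := Finset.one_lt_card.mp
          (show 1 < (w.support.image (fun q => q.2.1)).card by omega)
        set w₂ : F3 := Eb11 α₁ α₂ lam b c w - ((a:ℂ) + α₁) • w with hw₂def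
        have hw₂W : w₂ ∈ W := W.sub_mem (hW11 w hwW) (W.smul_mem _ hwW)
        have hw₂c : ∀ i r₁ r₂ : ℤ, w₂ (i, r₁, r₂) = ((r₁:ℂ) - (a:ℂ)) * w (i, r₁, r₂) := by
          intro i r₁ r₂
          rw [hw₂def]
          simp only [Finsupp.sub_apply, Finsupp.smul_apply, smul_eq_mul, Eb11_apply]
          ring
        obtain ⟨qb, hqbS, hqb⟩ := Finset.mem_image.mp hb
        obtain ⟨bi, br1, br2⟩ := qb
        have hbr1 : br1 = bb := hqb
        have hv : w₂ (bi, br1, br2) ≠ 0 := by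
          rw [hw₂c]
          refine mul_ne_zero ?_ (Finsupp.mem_support_iff.mp hqbS)
          rw [hbr1]
          rw [sub_ne_zero]
          exact_mod_cast (Ne.symm hab)
        have hw₂0 : w₂ ≠ 0 := fun h0 => hv (by rw [h0]; rfl)
        have hsub : (w₂.support.image (fun q => q.2.1))
            ⊆ (w.support.image (fun q => q.2.1)).erase a := by
          intro x hx
          obtain ⟨q, hqS, hq⟩ := Finset.mem_image.mp hx
          obtain ⟨qi2, qr12, qr22⟩ := q
          have hne : w₂ (qi2, qr12, qr22) ≠ 0 := Finsupp.mem_support_iff.mp hqS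
          rw [hw₂c] at hne
          have hwq : w (qi2, qr12, qr22) ≠ 0 := fun h0 => hne (by rw [h0]; ring)
          have hxa : qr12 ≠ a := by
            intro he
            apply hne
            rw [he]
            ring
          refine Finset.mem_erase.mpr ⟨?_, ?_⟩
          · rw [← hq]; exact hxa
          · exact Finset.mem_image.mpr ⟨(qi2, qr12, qr22), Finsupp.mem_support_iff.mpr hwq, hq⟩
        have hcard2 : (w₂.support.image (fun q => q.2.1)).card ≤ n := by
          have h1 := Finset.card_le_card hsub
          have h2 := Finset.card_erase_le (a := a) (s := (w.support.image (fun q => q.2.1)))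
          have h3 : ((w.support.image (fun q => q.2.1)).erase a).card
              = (w.support.image (fun q => q.2.1)).card - 1 :=
            Finset.card_erase_of_mem ha
          omega
        exact IH w₂ hw₂W hw₂0 hcard2

lemma purge2 (α₁ α₂ lam b c : ℂ) (W : Submodule ℂ F3)
    (hW22 : ∀ x ∈ W, Eb22 α₁ α₂ lam b c x ∈ W) (ρ : ℤ) :
    ∀ n : ℕ, ∀ w : F3, w ∈ W → w ≠ 0 → (∀ i r₁ r₂ : ℤ, w (i, r₁, r₂) ≠ 0 → r₁ = ρ) →
      (w.support.image (fun q => q.2.2)).card ≤ n →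
      ∃ w' : F3, w' ∈ W ∧ w' ≠ 0 ∧ ∃ ρ₂ : ℤ,
        ∀ i r₁ r₂ : ℤ, w' (i, r₁, r₂) ≠ 0 → r₁ = ρ ∧ r₂ = ρ₂ := by
  intro n
  induction n with
  | zero =>
      intro w hwW hw0 hfix hcard
      exfalso
      have h1 : (w.support.image (fun q => q.2.2)).Nonempty :=
        (Finsupp.support_nonempty_iff.mpr hw0).image _
      have := h1.card_pos
      omega
  | succ n IH =>
      intro w hwW hw0 hfix hcard
      by_cases hS : (w.support.image (fun q => q.2.2)).card ≤ 1
      · refine ⟨w, hwW, hw0, ?_⟩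
        have h1 : (w.support.image (fun q => q.2.2)).Nonempty :=
          (Finsupp.support_nonempty_iff.mpr hw0).image _
        obtain ⟨ρ₂, hρ⟩ := h1
        refine ⟨ρ₂, fun i r₁ r₂ h => ?_⟩
        have hmem : r₂ ∈ (w.support.image (fun q => q.2.2)) :=
          Finset.mem_image.mpr ⟨(i, r₁, r₂), Finsupp.mem_support_iff.mpr h, rfl⟩
        exact ⟨hfix i r₁ r₂ h, Finset.card_le_one.mp hS r₂ hmem ρ₂ hρ⟩
      · obtain ⟨a, ha, bb, hb, hab⟩ := Finset.one_lt_card.mp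
          (show 1 < (w.support.image (fun q => q.2.2)).card by omega)
        set w₂ : F3 := Eb22 α₁ α₂ lam b c w - ((a:ℂ) + α₂) • w with hw₂def
        have hw₂W : w₂ ∈ W := W.sub_mem (hW22 w hwW) (W.smul_mem _ hwW)
        have hw₂c : ∀ i r₁ r₂ : ℤ, w₂ (i, r₁, r₂) = ((r₂:ℂ) - (a:ℂ)) * w (i, r₁, r₂) := by
          intro i r₁ r₂
          rw [hw₂def]
          simp only [Finsupp.sub_apply, Finsupp.smul_apply, smul_eq_mul, Eb22_apply]
          ring
        obtain ⟨qb, hqbS, hqb⟩ := Finset.mem_image.mp hb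
        obtain ⟨bi, br1, br2⟩ := qb
        have hbr2 : br2 = bb := hqb
        have hv : w₂ (bi, br1, br2) ≠ 0 := by
          rw [hw₂c]
          refine mul_ne_zero ?_ (Finsupp.mem_support_iff.mp hqbS)
          rw [hbr2]
          rw [sub_ne_zero]
          exact_mod_cast (Ne.symm hab)
        have hw₂0 : w₂ ≠ 0 := fun h0 => hv (by rw [h0]; rfl)
        have hfix2 : ∀ i r₁ r₂ : ℤ, w₂ (i, r₁, r₂) ≠ 0 → r₁ = ρ := by
          intro i r₁ r₂ h
          rw [hw₂c] at h
          exact hfix i r₁ r₂ (fun h0 => h (by rw [h0]; ring))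
        have hsub : (w₂.support.image (fun q => q.2.2))
            ⊆ (w.support.image (fun q => q.2.2)).erase a := by
          intro x hx
          obtain ⟨q, hqS, hq⟩ := Finset.mem_image.mp hx
          obtain ⟨qi2, qr12, qr22⟩ := q
          have hne : w₂ (qi2, qr12, qr22) ≠ 0 := Finsupp.mem_support_iff.mp hqS
          rw [hw₂c] at hne
          have hwq : w (qi2, qr12, qr22) ≠ 0 := fun h0 => hne (by rw [h0]; ring)
          have hxa : qr22 ≠ a := by
            intro he
            apply hne
            rw [he]
            ring
          refine Finset.mem_erase.mpr ⟨?_, ?_⟩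
          · rw [← hq]; exact hxa
          · exact Finset.mem_image.mpr ⟨(qi2, qr12, qr22), Finsupp.mem_support_iff.mpr hwq, hq⟩
        have hcard2 : (w₂.support.image (fun q => q.2.2)).card ≤ n := by
          have h1 := Finset.card_le_card hsub
          have h2 : ((w.support.image (fun q => q.2.2)).erase a).card
              = (w.support.image (fun q => q.2.2)).card - 1 :=
            Finset.card_erase_of_mem ha
          omega
        exact IH w₂ hw₂W hw₂0 hfix2 hcard2

end Aux
/-- Theorem 2.3: under the genericity conditions the sl₃-module F^α_{2b}(V) is irreducible:
    every sl₃-invariant subspace is 0 or everything. -/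
theorem F3_irreducible (α₁ α₂ lam b c : ℂ)
    (h1 : ∀ m : ℤ, c + lam ≠ (m : ℂ)) (h2 : ∀ m : ℤ, c - lam ≠ (m : ℂ))
    (h3 : ∀ m : ℤ, α₁ - b - lam ≠ (m : ℂ)) (h4 : ∀ m : ℤ, α₂ - b + lam ≠ (m : ℂ))
    (h5 : ∀ m : ℤ, α₁ + 2 * b ≠ (m : ℂ)) (h6 : ∀ m : ℤ, α₂ + 2 * b ≠ (m : ℂ))
    (h7 : ∀ m : ℤ, α₁ + α₂ + b + c ≠ (m : ℂ)) (h8 : ∀ m : ℤ, α₁ + α₂ + b - c ≠ (m : ℂ))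
    (h9 : ∀ m : ℤ, c + 3 * b ≠ (m : ℂ)) (h10 : ∀ m : ℤ, c - 3 * b ≠ (m : ℂ))
    (W : Submodule ℂ F3)
    (hW11 : ∀ x ∈ W, Eb11 α₁ α₂ lam b c x ∈ W) (hW22 : ∀ x ∈ W, Eb22 α₁ α₂ lam b c x ∈ W)
    (hW33 : ∀ x ∈ W, Eb33 α₁ α₂ lam b c x ∈ W) (hW12 : ∀ x ∈ W, Eb12 α₁ α₂ lam b c x ∈ W)
    (hW21 : ∀ x ∈ W, Eb21 α₁ α₂ lam b c x ∈ W) (hW13 : ∀ x ∈ W, Eb13 α₁ α₂ lam b c x ∈ W)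
    (hW31 : ∀ x ∈ W, Eb31 α₁ α₂ lam b c x ∈ W) (hW23 : ∀ x ∈ W, Eb23 α₁ α₂ lam b c x ∈ W)
    (hW32 : ∀ x ∈ W, Eb32 α₁ α₂ lam b c x ∈ W) :
    W = ⊥ ∨ W = ⊤ := by
  rcases eq_or_ne W ⊥ with hbot | hbot
  · exact Or.inl hbot
  right
  obtain ⟨w, hwW, hw0⟩ := Submodule.exists_mem_ne_zero_of_ne_bot hbot
  obtain ⟨w₁, hw₁W, hw₁0, ρ₁, hfix1⟩ := purge1 α₁ α₂ lam b c W hW11 _ w hwW hw0 le_rfl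
  obtain ⟨w₂, hw₂W, hw₂0, ρ₂, hfix⟩ := purge2 α₁ α₂ lam b c W hW22 ρ₁ _ w₁ hw₁W hw₁0 hfix1 le_rfl
  have hIne : (w₂.support.image Prod.fst).Nonempty :=
    (Finsupp.support_nonempty_iff.mpr hw₂0).image _
  set m := (w₂.support.image Prod.fst).min' hIne with hmdef
  set M := (w₂.support.image Prod.fst).max' hIne with hMdef
  have hsupp : ∀ i r₁ r₂ : ℤ, w₂ (i, r₁, r₂) ≠ 0 →
      r₁ = ρ₁ ∧ r₂ = ρ₂ ∧ m ≤ i ∧ i ≤ m + (((M - m).toNat : ℕ) : ℤ) := by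
    intro i r₁ r₂ h
    obtain ⟨f1, f2⟩ := hfix i r₁ r₂ h
    have l1 : m ≤ i := (w₂.support.image Prod.fst).min'_le i
      (Finset.mem_image.mpr ⟨(i, r₁, r₂), Finsupp.mem_support_iff.mpr h, rfl⟩)
    have l2 : i ≤ M := (w₂.support.image Prod.fst).le_max' i
      (Finset.mem_image.mpr ⟨(i, r₁, r₂), Finsupp.mem_support_iff.mpr h, rfl⟩)
    exact ⟨f1, f2, l1, by omega⟩
  obtain ⟨j, s₁, s₂, hvbW⟩ := key_lemma α₁ α₂ lam b c h1 h2 h3 h4 h9 h10 W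
    hW12 hW21 hW13 hW31 hW23 hW32 ((M - m).toNat) ρ₁ ρ₂ m w₂ hw₂W hw₂0 hsupp
  have hall := spread α₁ α₂ lam b c h1 h2 h3 h4 h5 h6 h7 h8 W
    hW12 hW21 hW13 hW31 hW23 hW32 j s₁ s₂ hvbW
  apply Submodule.eq_top_iff'.mpr
  intro x
  induction x using Finsupp.induction with
  | zero => exact W.zero_mem
  | single_add a bv f haf hb ih =>
      refine W.add_mem ?_ ih
      obtain ⟨i, r1, r2⟩ := a
      have h := W.smul_mem bv (hall i r1 r2)
      rwa [vb, Finsupp.smul_single, smul_eq_mul, mul_one] at h
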